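/- The number of large ν-Schröder paths equals twice the number of small ν-Schröder paths if and only if ν begins with a north step and ends with an east step. -/

import Mathlib

/-- Steps of a (Schröder) lattice path: north, east, diagonal. -/
inductive Step : Type
  | N | E | D
deriving DecidableEq, Repr

/-- Total horizontal displacement of a path. -/
def eLen (p : List Step) : ℕ := p.count Step.E + p.count Step.D

/-- Total vertical displacement of a path. -/
def nLen (p : List Step) : ℕ := p.count Step.N + p.count Step.D

/-- A lattice path uses only `N` and `E` steps. -/
def IsLatticePath (ν : List Step) : Prop := Step.D ∉ ν

/-- `colVal p x` is twice the starting height of the step of `p` crossing the vertical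
strip between abscissas `x` and `x+1`, plus `1` if that step is diagonal.  Comparing these
values columnwise is equivalent to comparing the heights of the paths over each strip. -/
def colVal : List Step → ℕ → ℕ
  | [], _ => 0
  | Step.N :: p, x => colVal p x + 2
  | Step.E :: _, 0 => 0
  | Step.E :: p, x+1 => colVal p x
  | Step.D :: _, 0 => 1
  | Step.D :: p, x+1 => colVal p x + 2

/-- `π` stays weakly above `ρ` (same endpoints intended). -/
def WeaklyAbove (π ρ : List Step) : Prop := ∀ x, colVal ρ x ≤ colVal π x

/-- Replace every peak (consecutive `NE`) of a path by a diagonal step; applied to `ν`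
this gives the path `μ` of the large ν-Schröder path definition. -/
def cutPeaks : List Step → List Step
  | [] => []
  | Step.N :: Step.E :: p => Step.D :: cutPeaks p
  | s :: p => s :: cutPeaks p

/-- A ν-Dyck path: an `N,E` path with the same endpoints as `ν` staying weakly above `ν`. -/
def IsNuDyck (ν π : List Step) : Prop :=
  Step.D ∉ π ∧ eLen π = eLen ν ∧ nLen π = nLen ν ∧ WeaklyAbove π ν

/-- A (small) ν-Schröder path: an `N,E,D` path with the same endpoints as `ν` staying weakly
above `ν` (this automatically forbids diagonal steps on the ν-diagonal). -/
def IsSmallSchroder (ν π : List Step) : Prop :=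
  eLen π = eLen ν ∧ nLen π = nLen ν ∧ WeaklyAbove π ν

/-- A large ν-Schröder path: an `N,E,D` path with the same endpoints as `ν` staying weakly
above the path obtained from `ν` by replacing each peak by a diagonal step. -/
def IsLargeSchroder (ν π : List Step) : Prop :=
  eLen π = eLen ν ∧ nLen π = nLen ν ∧ WeaklyAbove π (cutPeaks ν)

/-- Number of peaks (consecutive `NE` pairs). -/
def peaks (p : List Step) : ℕ := (p.zip p.tail).count (Step.N, Step.E)

/-- Number of valleys (consecutive `EN` pairs). -/
def valleys (p : List Step) : ℕ := (p.zip p.tail).count (Step.E, Step.N)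

/-- Lattice points at which valleys of a path occur (starting the path at `(x,y)`). -/
def valleyPts : List Step → ℕ → ℕ → List (ℕ × ℕ)
  | [], _, _ => []
  | Step.E :: p, x, y =>
      (if p.head? = some Step.N then [(x+1, y)] else []) ++ valleyPts p (x+1) y
  | Step.N :: p, x, y => valleyPts p x (y+1)
  | Step.D :: p, x, y => valleyPts p (x+1) (y+1)

/-- Lattice points at which high peaks (peaks strictly above `ν`) of a path occur. -/
def highPeakPts (ν : List Step) : List Step → ℕ → ℕ → List (ℕ × ℕ)
  | [], _, _ => []
  | Step.N :: p, x, y =>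
      (if p.head? = some Step.E ∧ colVal ν x < 2*(y+1) then [(x, y+1)] else []) ++
        highPeakPts ν p x (y+1)
  | Step.E :: p, x, y => highPeakPts ν p (x+1) y
  | Step.D :: p, x, y => highPeakPts ν p (x+1) (y+1)

/-- Number of high peaks of `π` relative to `ν`. -/
def highPeaks (ν π : List Step) : ℕ := (highPeakPts ν π 0 0).length

/-- j-th ν-Narayana number: number of ν-Dyck paths with exactly `j` valleys. -/
noncomputable def Nar (ν : List Step) (j : ℕ) : ℕ :=
  Nat.card {π : List Step // IsNuDyck ν π ∧ valleys π = j}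

/-- Number of small ν-Schröder paths with exactly `i` diagonal steps. -/
noncomputable def schNum (ν : List Step) (i : ℕ) : ℕ :=
  Nat.card {π : List Step // IsSmallSchroder ν π ∧ π.count Step.D = i}

/-- `lowH ν x` is the lowest height of a point of `ν` at abscissa `x`. -/
def lowH : List Step → ℕ → ℕ
  | _, 0 => 0
  | [], _+1 => 0
  | Step.N :: p, x+1 => lowH p (x+1) + 1
  | Step.E :: p, x+1 => lowH p x
  | Step.D :: p, x+1 => lowH p x + 1

/-- The lowest lattice path from `(0,0)` to `(b,a)` weakly above the line segment
from `(0,0)` to `(b,a)`. -/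
def nuAB (a b : ℕ) : List Step :=
  (List.range b).flatMap (fun x =>
    List.replicate (((x+1)*a + b - 1)/b - (x*a + b - 1)/b) Step.N ++ [Step.E])

/-- Number of large rational `(a,b)`-Schröder paths with `i` diagonal steps. -/
noncomputable def largeCount (a b i : ℕ) : ℕ :=
  Nat.card {π : List Step // IsLargeSchroder (nuAB a b) π ∧ π.count Step.D = i}

/-- Number of small rational `(a,b)`-Schröder paths with `i` diagonal steps. -/
noncomputable def smallCount (a b i : ℕ) : ℕ :=
  Nat.card {π : List Step // IsSmallSchroder (nuAB a b) π ∧ π.count Step.D = i}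

/-- Binomial coefficient with an integer lower entry (zero when negative). -/
def chooseZ (n : ℕ) (k : ℤ) : ℕ := if 0 ≤ k then n.choose k.toNat else 0

/-- The region weakly above `ν` in the rectangle `[0,b] × [0,a]`. -/
def InRegion (ν : List Step) (p : ℕ × ℕ) : Prop :=
  p.1 ≤ eLen ν ∧ p.2 ≤ nLen ν ∧ lowH ν p.1 ≤ p.2

/-- Two points of the region are ν-incompatible if one is strictly southwest of the other and
the rectangle they span lies in the region (equivalently its bottom-right corner does). -/
def Incompat (ν : List Step) (p q : ℕ × ℕ) : Prop :=
  ((p.1 < q.1 ∧ p.2 < q.2) ∨ (q.1 < p.1 ∧ q.2 < p.2)) ∧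
    InRegion ν (max p.1 q.1, min p.2 q.2)

/-- A ν-binary tree: a maximal set of pairwise ν-compatible points of the region. -/
def IsBinaryTree (ν : List Step) (T : Finset (ℕ × ℕ)) : Prop :=
  (∀ p ∈ T, InRegion ν p) ∧ (∀ p ∈ T, ∀ q ∈ T, ¬ Incompat ν p q) ∧
    ∀ r, InRegion ν r → (∀ p ∈ T, ¬ Incompat ν r p) → r ∈ T

/-- A ν-Schröder tree: pairwise ν-compatible points of the region containing the root
`(0,a)` and meeting every row and every column. -/
def IsSchroderTree (ν : List Step) (T : Finset (ℕ × ℕ)) : Prop :=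
  (∀ p ∈ T, InRegion ν p) ∧ (∀ p ∈ T, ∀ q ∈ T, ¬ Incompat ν p q) ∧
    (0, nLen ν) ∈ T ∧ (∀ y ≤ nLen ν, ∃ p ∈ T, p.2 = y) ∧ (∀ x ≤ eLen ν, ∃ p ∈ T, p.1 = x)

/-- One contraction step: delete a node, provided the result is still a ν-Schröder tree. -/
def ContractStep (ν : List Step) (T T' : Finset (ℕ × ℕ)) : Prop :=
  ∃ q ∈ T, T' = T.erase q ∧ IsSchroderTree ν T'

/-- `p` is a leaf of the (plane tree associated to the) node set `T`: no node strictly below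
it in its column and none strictly to its right in its row. -/
def IsLeafIn (T : Finset (ℕ × ℕ)) (p : ℕ × ℕ) : Prop :=
  (∀ q ∈ T, ¬(q.1 = p.1 ∧ q.2 < p.2)) ∧ (∀ q ∈ T, ¬(q.2 = p.2 ∧ p.1 < q.1))

/-- Starting points of vertical runs and ending points of horizontal runs of `ν`. -/
def leafPts (ν : List Step) : Finset (ℕ × ℕ) :=
  (valleyPts ν 0 0).toFinset ∪ (if ν.head? = some Step.N then {((0 : ℕ), (0 : ℕ))} else ∅) ∪
    (if ν.getLast? = some Step.E then {(eLen ν, nLen ν)} else ∅)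

/-- `horizNu ν x y`: maximal number of east steps that can be placed starting at `(x,y)`
before crossing `ν` (staying within the bounding rectangle). -/
def horizNu (ν : List Step) (x y : ℕ) : ℕ :=
  ((Finset.Icc 1 (eLen ν - x)).filter (fun k => lowH ν (x + k) ≤ y)).card

/-- No `N` step of the given path (started at `(x,y)`) has initial point with
`horizNu`-value `h`. -/
def noNAt (ν : List Step) (h : ℕ) : List Step → ℕ → ℕ → Prop
  | [], _, _ => True
  | Step.N :: p, x, y => horizNu ν x y ≠ h ∧ noNAt ν h p x (y+1)
  | Step.E :: p, x, y => noNAt ν h p (x+1) y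
  | Step.D :: p, x, y => noNAt ν h p (x+1) (y+1)

/-- Right contraction: replace a consecutive `EN` pair (a valley) by a `D` step. -/
def RightC (μ lam : List Step) : Prop :=
  ∃ p q, μ = p ++ Step.E :: Step.N :: q ∧ lam = p ++ Step.D :: q

/-- Left contraction: delete an `E` step together with the most recent preceding `N` step
whose initial point has the same `horizNu` statistic as the initial point of the `E` step,
shift the intermediate subpath, and place a `D` step at the initial point of the `N` step. -/
def LeftC (ν μ lam : List Step) : Prop :=
  ∃ p m q, μ = p ++ Step.N :: (m ++ Step.E :: q) ∧ lam = p ++ Step.D :: (m ++ q) ∧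
    horizNu ν (eLen p) (nLen p)
      = horizNu ν (eLen (p ++ Step.N :: m)) (nLen (p ++ Step.N :: m)) ∧
    noNAt ν (horizNu ν (eLen (p ++ Step.N :: m)) (nLen (p ++ Step.N :: m)))
      m (eLen p) (nLen p + 1)

/-- Diagonal contraction: delete an `E` step ending at the initial point `r` of a `D` step,
together with the most recent preceding `N` step whose initial point `s` satisfies
`horizNu s = horizNu r`, shift the intermediate subpath, and place a `D` step at `s`. -/
def DiagC (ν μ lam : List Step) : Prop :=
  ∃ p m q, μ = p ++ Step.N :: (m ++ Step.E :: Step.D :: q) ∧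
    lam = p ++ Step.D :: (m ++ Step.D :: q) ∧
    horizNu ν (eLen p) (nLen p)
      = horizNu ν (eLen (p ++ Step.N :: m) + 1) (nLen (p ++ Step.N :: m)) ∧
    noNAt ν (horizNu ν (eLen (p ++ Step.N :: m) + 1) (nLen (p ++ Step.N :: m)))
      m (eLen p) (nLen p + 1)

/-- Cover relation of the contraction poset of ν-Schröder paths. -/
def Covers (ν μ lam : List Step) : Prop :=
  IsSmallSchroder ν μ ∧ IsSmallSchroder ν lam ∧
    (RightC μ lam ∨ LeftC ν μ lam ∨ DiagC ν μ lam)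

/-- The Morse matching: `σ` (having a `D` step preceded by no valley) is matched with the
path `π` obtained by replacing the first such `D` step by `EN`. -/
def MorseM (ν : List Step) : Set (List Step × List Step) :=
  { z | ∃ p q, Step.D ∉ p ∧ valleys p = 0 ∧
      z.2 = p ++ Step.D :: q ∧ z.1 = p ++ Step.E :: Step.N :: q ∧ IsSmallSchroder ν z.2 }

/-- Twice the area between a small ν-Schröder path and `ν`. -/
def area2 (ν π : List Step) : ℕ :=
  ∑ x ∈ Finset.range (eLen ν), (colVal π x - colVal ν x)

/-- An `(I,J̄)`-forest: increasing, non-crossing arcs. -/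
def IsIJForest (I J : Finset ℕ) (F : Finset (ℕ × ℕ)) : Prop :=
  (∀ a ∈ F, a.1 ∈ I ∧ a.2 ∈ J ∧ a.1 < a.2) ∧
    (∀ a ∈ F, ∀ a' ∈ F, ¬(a.1 < a'.1 ∧ a'.1 < a.2 ∧ a.2 < a'.2))

/-- A covering `(I,J̄)`-forest: contains the arc `(1,n)` and has no isolated node. -/
def IsCoveringForest (n : ℕ) (I J : Finset ℕ) (F : Finset (ℕ × ℕ)) : Prop :=
  IsIJForest I J F ∧ (1, n) ∈ F ∧
    (∀ i ∈ I, ∃ a ∈ F, a.1 = i) ∧ (∀ j ∈ J, ∃ a ∈ F, a.2 = j)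

/-- The lattice path read off from the interleaving of `I` and `J̄` (elements `2,…,n-1`,
`E` for elements of `I`, `N` for the others). -/
def nuOf (n : ℕ) (I : Finset ℕ) : List Step :=
  (List.range' 2 (n - 2)).map (fun k => if k ∈ I then Step.E else Step.N)

section SchroederProofAux
open Finset

instance : Fintype Step := ⟨⟨{Step.N, Step.E, Step.D}, by decide⟩, by intro x; cases x <;> decide⟩

@[simp] lemma eLen_nil : eLen [] = 0 := rfl
@[simp] lemma nLen_nil : nLen [] = 0 := rfl
@[simp] lemma eLen_cons_N (p : List Step) : eLen (Step.N :: p) = eLen p := by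
  simp [eLen, List.count_cons]
@[simp] lemma eLen_cons_E (p : List Step) : eLen (Step.E :: p) = eLen p + 1 := by
  simp [eLen, List.count_cons]; omega
@[simp] lemma eLen_cons_D (p : List Step) : eLen (Step.D :: p) = eLen p + 1 := by
  simp [eLen, List.count_cons]; omega
@[simp] lemma nLen_cons_N (p : List Step) : nLen (Step.N :: p) = nLen p + 1 := by
  simp [nLen, List.count_cons]; omega
@[simp] lemma nLen_cons_E (p : List Step) : nLen (Step.E :: p) = nLen p := by
  simp [nLen, List.count_cons]
@[simp] lemma nLen_cons_D (p : List Step) : nLen (Step.D :: p) = nLen p + 1 := by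
  simp [nLen, List.count_cons]; omega
@[simp] lemma eLen_append (p q : List Step) : eLen (p ++ q) = eLen p + eLen q := by
  simp [eLen, List.count_append]; omega
@[simp] lemma nLen_append (p q : List Step) : nLen (p ++ q) = nLen p + nLen q := by
  simp [nLen, List.count_append]; omega
@[simp] lemma eLen_replicate (k : ℕ) : eLen (List.replicate k Step.N) = 0 := by
  simp [eLen, List.count_replicate]
@[simp] lemma nLen_replicate (k : ℕ) : nLen (List.replicate k Step.N) = k := by
  simp [nLen, List.count_replicate]

lemma length_le_elen_add_nlen (l : List Step) : l.length ≤ eLen l + nLen l := by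
  induction l with
  | nil => simp
  | cons s t ih => cases s <;> simp <;> omega

@[simp] lemma colVal_nil (x : ℕ) : colVal [] x = 0 := rfl
@[simp] lemma colVal_cons_N (p : List Step) (x : ℕ) : colVal (Step.N :: p) x = colVal p x + 2 := rfl
@[simp] lemma colVal_cons_E_zero (p : List Step) : colVal (Step.E :: p) 0 = 0 := rfl
@[simp] lemma colVal_cons_E_succ (p : List Step) (x : ℕ) : colVal (Step.E :: p) (x+1) = colVal p x := rfl
@[simp] lemma colVal_cons_D_zero (p : List Step) : colVal (Step.D :: p) 0 = 1 := rfl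
@[simp] lemma colVal_cons_D_succ (p : List Step) (x : ℕ) : colVal (Step.D :: p) (x+1) = colVal p x + 2 := rfl

lemma colVal_append_left : ∀ (ρ τ : List Step) (x : ℕ), x < eLen ρ →
    colVal (ρ ++ τ) x = colVal ρ x := by
  intro ρ
  induction ρ with
  | nil => intro τ x hx; simp at hx
  | cons s ρ ih =>
    intro τ x hx
    cases s with
    | N => simpa using ih τ x (by simpa using hx)
    | E =>
      cases x with
      | zero => simp
      | succ x => simp only [List.cons_append, colVal_cons_E_succ]; exact ih τ x (by simp at hx; omega)
    | D =>
      cases x with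
      | zero => simp
      | succ x =>
        simp only [List.cons_append, colVal_cons_D_succ]
        rw [ih τ x (by simp at hx; omega)]

lemma colVal_append_cross : ∀ (ρ : List Step) (c : Step) (τ : List Step), c ≠ Step.N →
    colVal (ρ ++ c :: τ) (eLen ρ) = 2 * nLen ρ + (if c = Step.D then 1 else 0) := by
  intro ρ
  induction ρ with
  | nil =>
    intro c τ hc
    cases c with
    | N => exact absurd rfl hc
    | E => simp
    | D => simp
  | cons s ρ ih =>
    intro c τ hc
    cases s with
    | N => simp [ih c τ hc]; ring
    | E => simp [ih c τ hc]
    | D => simp [ih c τ hc]; ring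

lemma colVal_of_eLen_le : ∀ (p : List Step) (x : ℕ), eLen p ≤ x → colVal p x = 2 * nLen p := by
  intro p
  induction p with
  | nil => simp
  | cons s p ih =>
    intro x hx
    cases s with
    | N => simp [ih x (by simpa using hx)]; ring
    | E =>
      cases x with
      | zero => simp at hx
      | succ x => simp [ih x (by simp at hx; omega)]
    | D =>
      cases x with
      | zero => simp at hx
      | succ x => simp [ih x (by simp at hx; omega)]; ring

lemma colVal_le_two_nLen : ∀ (p : List Step) (x : ℕ), colVal p x ≤ 2 * nLen p := by
  intro p
  induction p with
  | nil => simp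
  | cons s p ih =>
    intro x
    cases s with
    | N => have := ih x; simp; omega
    | E => cases x with
      | zero => simp
      | succ x => have := ih x; simp; omega
    | D => cases x with
      | zero => simp; omega
      | succ x => have := ih x; simp; omega

lemma colVal_mono_succ {ν : List Step} (hν : Step.D ∉ ν) :
    ∀ x, colVal ν x ≤ colVal ν (x+1) := by
  induction ν with
  | nil => simp
  | cons s p ih =>
    intro x
    have hs : Step.D ∉ p := fun h => hν (List.mem_cons_of_mem _ h)
    cases s with
    | N => simp; exact ih hs x
    | E =>
      cases x with
      | zero => simp
      | succ x => simpa using ih hs x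
    | D => exact absurd List.mem_cons_self hν

lemma colVal_mono {ν : List Step} (hν : Step.D ∉ ν) :
    ∀ {x y}, x ≤ y → colVal ν x ≤ colVal ν y := by
  intro x y hxy
  induction y with
  | zero => simp_all
  | succ y ih =>
    rcases Nat.lt_or_ge x (y+1) with h | h
    · exact le_trans (ih (by omega)) (colVal_mono_succ hν y)
    · have : x = y + 1 := by omega
      subst this; exact le_rfl

lemma colVal_even {ν : List Step} (hν : Step.D ∉ ν) : ∀ x, ∃ m, colVal ν x = 2 * m := by
  induction ν with
  | nil => intro x; exact ⟨0, rfl⟩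
  | cons s p ih =>
    intro x
    have hs : Step.D ∉ p := fun h => hν (List.mem_cons_of_mem _ h)
    cases s with
    | N => obtain ⟨m, hm⟩ := ih hs x; exact ⟨m+1, by simp [hm]; ring⟩
    | E =>
      cases x with
      | zero => exact ⟨0, rfl⟩
      | succ x => obtain ⟨m, hm⟩ := ih hs x; exact ⟨m, by simpa using hm⟩
    | D => exact absurd List.mem_cons_self hν

lemma eLen_zero_eq {p : List Step} (h : eLen p = 0) : p = List.replicate (nLen p) Step.N := by
  induction p with
  | nil => simp
  | cons s t ih =>
    cases s with
    | N => simp at h ⊢; rw [List.replicate_succ]; simpa using ih h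
    | E => simp at h
    | D => simp at h

lemma exists_decomp : ∀ (π : List Step), 0 < eLen π →
    ∃ ρ c k, c ≠ Step.N ∧ π = ρ ++ c :: List.replicate k Step.N := by
  intro π
  induction π using List.reverseRecOn with
  | nil => intro h; simp at h
  | append_singleton l s ih =>
    intro hpos
    cases s with
    | N =>
      have hl : 0 < eLen l := by simpa using hpos
      obtain ⟨ρ, c, k, hc, rfl⟩ := ih hl
      exact ⟨ρ, c, k+1, hc, by simp [List.replicate_succ']⟩
    | E => exact ⟨l, Step.E, 0, by simp, by simp⟩
    | D => exact ⟨l, Step.D, 0, by simp, by simp⟩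

lemma repN_cons_inj : ∀ (k₁ k₂ : ℕ) (c₁ c₂ : Step) (l₁ l₂ : List Step), c₁ ≠ Step.N → c₂ ≠ Step.N →
    List.replicate k₁ Step.N ++ c₁ :: l₁ = List.replicate k₂ Step.N ++ c₂ :: l₂ →
    k₁ = k₂ ∧ c₁ = c₂ ∧ l₁ = l₂ := by
  intro k₁
  induction k₁ with
  | zero =>
    intro k₂ c₁ c₂ l₁ l₂ h₁ h₂ he
    cases k₂ with
    | zero => simpa using he
    | succ k₂ => simp [List.replicate_succ] at he; exact absurd he.1 h₁
  | succ k₁ ih =>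
    intro k₂ c₁ c₂ l₁ l₂ h₁ h₂ he
    cases k₂ with
    | zero => simp [List.replicate_succ] at he; exact absurd he.1.symm h₂
    | succ k₂ =>
      simp only [List.replicate_succ, List.cons_append, List.cons.injEq] at he
      obtain ⟨h, h', h''⟩ := ih k₂ c₁ c₂ l₁ l₂ h₁ h₂ he.2
      exact ⟨by omega, h', h''⟩

lemma decomp_inj {ρ₁ ρ₂ : List Step} {c₁ c₂ : Step} {k₁ k₂ : ℕ} (h₁ : c₁ ≠ Step.N) (h₂ : c₂ ≠ Step.N)
    (he : ρ₁ ++ c₁ :: List.replicate k₁ Step.N = ρ₂ ++ c₂ :: List.replicate k₂ Step.N) :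
    ρ₁ = ρ₂ ∧ c₁ = c₂ ∧ k₁ = k₂ := by
  have := congrArg List.reverse he
  simp only [List.reverse_append, List.reverse_cons, List.reverse_replicate] at this
  rw [List.append_assoc, List.append_assoc] at this
  simp only [List.singleton_append] at this
  obtain ⟨hk, hc, hl⟩ := repN_cons_inj k₁ k₂ c₁ c₂ ρ₁.reverse ρ₂.reverse h₁ h₂ this
  exact ⟨by simpa using congrArg List.reverse hl, hc, hk⟩

end SchroederProofAux

section SchroederCount
open Finset

lemma nat_card_sigma' {I : Type*} [Fintype I] (F : I → Type*) [∀ i, Finite (F i)] :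
    Nat.card (Σ i, F i) = ∑ i, Nat.card (F i) := by
  letI : ∀ i, Fintype (F i) := fun i => Fintype.ofFinite _
  simp [Nat.card_eq_fintype_card, Fintype.card_sigma]

lemma finite_paths (P : List Step → Prop) (n : ℕ) (h : ∀ l, P l → l.length ≤ n) :
    Finite {l : List Step // P l} :=
  Set.Finite.to_subtype ((List.finite_length_le Step n).subset (fun l hl => h l hl))

def Mdp (w : ℕ → ℕ) : ℕ → ℕ → ℕ
  | 0 => fun t => if t = 0 then 1 else 0
  | (x+1) => fun t =>
      (if w x ≤ 2*t then ∑ s ∈ Finset.range (t+1), Mdp w x s else 0) +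
      (if w x + 1 ≤ 2*t then ∑ s ∈ Finset.range t, Mdp w x s else 0)

lemma Mdp_zero (w : ℕ → ℕ) (t : ℕ) : Mdp w 0 t = if t = 0 then 1 else 0 := rfl

lemma Mdp_succ (w : ℕ → ℕ) (x t : ℕ) : Mdp w (x+1) t =
    (if w x ≤ 2*t then ∑ s ∈ Finset.range (t+1), Mdp w x s else 0) +
    (if w x + 1 ≤ 2*t then ∑ s ∈ Finset.range t, Mdp w x s else 0) := rfl

theorem card_pathSet (w : ℕ → ℕ) : ∀ (b a : ℕ),
    Nat.card {π : List Step // eLen π = b ∧ nLen π = a ∧ ∀ x, x < b → w x ≤ colVal π x}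
      = ∑ t ∈ Finset.range (a+1), Mdp w b t := by
  intro b
  induction b with
  | zero =>
    intro a
    have h1 : (∑ t ∈ Finset.range (a+1), Mdp w 0 t) = 1 := by
      simp [Mdp_zero, Finset.sum_ite_eq']
    rw [h1]
    haveI : Unique {π : List Step // eLen π = 0 ∧ nLen π = a ∧ ∀ x, x < 0 → w x ≤ colVal π x} :=
      { default := ⟨List.replicate a Step.N, by simp⟩
        uniq := by
          rintro ⟨π, hπ1, hπ2, hπ3⟩
          apply Subtype.ext
          simpa [hπ2] using eLen_zero_eq hπ1 }
    exact Nat.card_unique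
  | succ b ih =>
    intro a
    set F : Fin (a+1) × Bool → Type := fun p =>
      {ρ : List Step // (eLen ρ = b ∧ nLen ρ + (if p.2 then 1 else 0) = (p.1 : ℕ) ∧
        (∀ x, x < b → w x ≤ colVal ρ x)) ∧
        (if p.2 then w b + 1 ≤ 2 * (p.1 : ℕ) else w b ≤ 2 * (p.1 : ℕ))} with hF
    haveI : ∀ p, Finite (F p) := by
      intro p
      apply finite_paths _ (b + a)
      rintro l ⟨⟨h1, h2, _⟩, _⟩
      have h3 := length_le_elen_add_nlen l
      have h4 : (p.1 : ℕ) ≤ a := by omega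
      have h5 : (if p.2 then 1 else 0) ≤ 1 := by split <;> omega
      omega
    let f0 : (Σ p, F p) → List Step := fun q =>
      q.2.val ++ (if q.1.2 then Step.D else Step.E) :: List.replicate (a - (q.1.1 : ℕ)) Step.N
    have hcne : ∀ (d : Bool), (if d then Step.D else Step.E) ≠ Step.N := by
      intro d; cases d <;> simp
    have hmem : ∀ q, eLen (f0 q) = b+1 ∧ nLen (f0 q) = a ∧ ∀ x, x < b+1 → w x ≤ colVal (f0 q) x := by
      rintro ⟨⟨t, d⟩, ρ, hρ⟩
      obtain ⟨⟨h1, h2, h3⟩, h4⟩ := hρ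
      dsimp only [f0] at *
      have ht : (t : ℕ) ≤ a := by omega
      have hd1 : (if d then 1 else 0) ≤ 1 := by split <;> omega
      refine ⟨?_, ?_, ?_⟩
      · cases d <;> simp [h1]
      · cases d <;> simp at h2 ⊢ <;> omega
      · intro x hx
        rcases Nat.lt_or_ge x b with hxb | hxb
        · rw [colVal_append_left _ _ x (by omega : x < eLen ρ)]
          exact h3 x hxb
        · have hxb' : x = b := by omega
          subst hxb'
          have hcr := colVal_append_cross ρ (if d then Step.D else Step.E)
            (List.replicate (a - (t:ℕ)) Step.N) (hcne d)
          rw [h1] at hcr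
          rw [hcr]
          cases d <;> simp at h2 h4 ⊢ <;> omega
    let g : (Σ p, F p) → {π : List Step // eLen π = b+1 ∧ nLen π = a ∧
        ∀ x, x < b+1 → w x ≤ colVal π x} := fun q => ⟨f0 q, hmem q⟩
    have hinj : Function.Injective g := by
      rintro ⟨⟨t₁, d₁⟩, ρ₁, hρ₁⟩ ⟨⟨t₂, d₂⟩, ρ₂, hρ₂⟩ hgeq
      have heq : f0 ⟨(t₁, d₁), ρ₁, hρ₁⟩ = f0 ⟨(t₂, d₂), ρ₂, hρ₂⟩ := congrArg Subtype.val hgeq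
      simp only [f0] at heq
      obtain ⟨hρ, hc, hk⟩ := decomp_inj (hcne d₁) (hcne d₂) heq
      have hd : d₁ = d₂ := by cases d₁ <;> cases d₂ <;> simp_all
      have ht : t₁ = t₂ := by
        have h₁ : (t₁ : ℕ) ≤ a := by omega
        have h₂ : (t₂ : ℕ) ≤ a := by omega
        have : (t₁ : ℕ) = (t₂ : ℕ) := by
          rcases hρ₁ with ⟨⟨e1, e2, _⟩, _⟩
          rcases hρ₂ with ⟨⟨f1, f2, _⟩, _⟩
          have : nLen ρ₁ = nLen ρ₂ := by rw [hρ]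
          subst hd
          omega
        exact Fin.ext this
      subst hd; subst ht; subst hρ
      rfl
    have hsurj : Function.Surjective g := by
      rintro ⟨π, h1, h2, h3⟩
      obtain ⟨ρ, c, k, hc, rfl⟩ := exists_decomp π (by omega)
      have hcval := colVal_append_cross ρ c (List.replicate k Step.N) hc
      have hcne1 : eLen (c :: List.replicate k Step.N) = 1 := by
        cases c <;> simp_all
      have he : eLen ρ = b := by simp [hcne1] at h1; omega
      have hcols : ∀ x, x < b → w x ≤ colVal ρ x := by
        intro x hx
        have hh := h3 x (by omega)
        rwa [colVal_append_left _ _ x (by omega)] at hh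
      rw [he] at hcval
      cases c with
      | N => exact absurd rfl hc
      | E =>
        have hn : nLen ρ + k = a := by simp at h2; omega
        have hguard : w b ≤ 2 * nLen ρ := by
          have hh := h3 b (by omega)
          rw [hcval] at hh
          simpa using hh
        refine ⟨⟨(⟨nLen ρ, by omega⟩, false), ⟨ρ, ?_, ?_⟩⟩, ?_⟩
        · exact ⟨he, by simp, hcols⟩
        · simpa using hguard
        · apply Subtype.ext
          dsimp only [g, f0]
          have hk : a - nLen ρ = k := by omega
          simp [hk]
      | D =>
        have hn : nLen ρ + 1 + k = a := by simp at h2; omega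
        have hguard : w b ≤ 2 * nLen ρ + 1 := by
          have hh := h3 b (by omega)
          rw [hcval] at hh
          simpa using hh
        refine ⟨⟨(⟨nLen ρ + 1, by omega⟩, true), ⟨ρ, ?_, ?_⟩⟩, ?_⟩
        · exact ⟨he, by simp, hcols⟩
        · simp; omega
        · apply Subtype.ext
          dsimp only [g, f0]
          have hk : a - (nLen ρ + 1) = k := by omega
          simp [hk]
    have hcard : Nat.card {π : List Step // eLen π = b+1 ∧ nLen π = a ∧
        ∀ x, x < b+1 → w x ≤ colVal π x} = Nat.card (Σ p, F p) :=
      (Nat.card_congr (Equiv.ofBijective g ⟨hinj, hsurj⟩)).symm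
    rw [hcard, nat_card_sigma']
    have hfiber : ∀ (p : Fin (a+1) × Bool), Nat.card (F p) =
        (if p.2 then (if w b + 1 ≤ 2*(p.1:ℕ) then ∑ s ∈ Finset.range (p.1:ℕ), Mdp w b s else 0)
         else (if w b ≤ 2*(p.1:ℕ) then ∑ s ∈ Finset.range ((p.1:ℕ)+1), Mdp w b s else 0)) := by
      rintro ⟨t, d⟩
      cases d with
      | false =>
        simp only [Bool.false_eq_true, if_false]
        by_cases hg : w b ≤ 2*(t:ℕ)
        · rw [if_pos hg, ← ih (t:ℕ)]
          apply Nat.card_congr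
          apply Equiv.subtypeEquivRight
          intro ρ
          simp only [hF]
          constructor
          · rintro ⟨⟨u1, u2, u3⟩, _⟩; refine ⟨u1, ?_, u3⟩; simp at u2; omega
          · rintro ⟨u1, u2, u3⟩; exact ⟨⟨u1, by simp; omega, u3⟩, by simpa using hg⟩
        · rw [if_neg hg]
          have : IsEmpty (F (t, false)) := by
            constructor
            rintro ⟨ρ, ⟨_, _, _⟩, h4⟩
            exact hg (by simpa using h4)
          exact Nat.card_of_isEmpty
      | true =>
        simp only [if_true]
        by_cases hg : w b + 1 ≤ 2*(t:ℕ)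
        · rw [if_pos hg]
          have ht1 : 1 ≤ (t : ℕ) := by omega
          rw [show (t:ℕ) = ((t:ℕ) - 1) + 1 by omega, ← ih ((t:ℕ) - 1)]
          apply Nat.card_congr
          apply Equiv.subtypeEquivRight
          intro ρ
          simp only [hF]
          constructor
          · rintro ⟨⟨u1, u2, u3⟩, _⟩; exact ⟨u1, by simp at u2; omega, u3⟩
          · rintro ⟨u1, u2, u3⟩; exact ⟨⟨u1, by simp; omega, u3⟩, by simpa using hg⟩
        · rw [if_neg hg]
          have : IsEmpty (F (t, true)) := by
            constructor
            rintro ⟨ρ, ⟨_, _, _⟩, h4⟩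
            exact hg (by simpa using h4)
          exact Nat.card_of_isEmpty
    rw [Finset.sum_congr rfl (fun p _ => hfiber p)] -- sum over univ
    rw [Fintype.sum_prod_type]
    have : ∀ t : Fin (a+1), (∑ d : Bool,
        (if d then (if w b + 1 ≤ 2*(t:ℕ) then ∑ s ∈ Finset.range (t:ℕ), Mdp w b s else 0)
         else (if w b ≤ 2*(t:ℕ) then ∑ s ∈ Finset.range ((t:ℕ)+1), Mdp w b s else 0)))
        = Mdp w (b+1) (t:ℕ) := by
      intro t
      rw [Fintype.sum_bool, Mdp_succ]
      simp [Nat.add_comm]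
    rw [Finset.sum_congr rfl (fun t _ => this t)]
    exact Fin.sum_univ_eq_sum_range _ _

end SchroederCount

section SchroederDP
open Finset

lemma Mdp_dead (v : ℕ → ℕ) (x t : ℕ) (h : 2*t < v x) : Mdp v (x+1) t = 0 := by
  rw [Mdp_succ, if_neg (by omega), if_neg (by omega)]

lemma sum_Mdp_zero (v : ℕ → ℕ) (n : ℕ) : (∑ s ∈ Finset.range n, Mdp v 0 s) = if 0 < n then 1 else 0 := by
  induction n with
  | zero => simp
  | succ n ih => rw [Finset.sum_range_succ, ih, Mdp_zero]; split_ifs <;> omega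

lemma Mdp_pos (v : ℕ → ℕ) : ∀ x t, (∀ y, y ≤ x → v y ≤ 2*t) → 1 ≤ Mdp v (x+1) t := by
  intro x
  induction x with
  | zero =>
    intro t hv
    rw [Mdp_succ, if_pos (by simpa using hv 0 le_rfl), sum_Mdp_zero]
    simp
  | succ x ih =>
    intro t hv
    rw [Mdp_succ, if_pos (hv (x+1) le_rfl)]
    have h1 : 1 ≤ Mdp v (x+1) t := ih t (fun y hy => hv y (by omega))
    have h2 : Mdp v (x+1) t ≤ ∑ s ∈ Finset.range (t+1), Mdp v (x+1) s :=
      Finset.single_le_sum (f := fun s => Mdp v (x+1) s) (fun _ _ => Nat.zero_le _)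
        (Finset.self_mem_range_succ t)
    omega

section Invariants

/-- the dichotomy hypothesis relating `W` to `w` on columns `< b`. -/
def WHyp (w W : ℕ → ℕ) (b : ℕ) : Prop :=
  (∀ y, ∃ m, w y = 2*m) ∧ (∀ y, w y ≤ w (y+1)) ∧
  (0 < b → W 0 = w 0 - (if 0 < w 0 then 1 else 0)) ∧
  (∀ z, z+1 < b → W (z+1) = w (z+1) - (if w z < w (z+1) then 1 else 0))

lemma whyp_mono {w W b} (H : WHyp w W b) : ∀ {i j}, i ≤ j → w i ≤ w j := by
  intro i j hij
  induction j with
  | zero => have : i = 0 := by omega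
            subst this; exact le_rfl
  | succ j ih =>
    rcases Nat.lt_or_ge i (j+1) with h | h
    · exact le_trans (ih (by omega)) (H.2.1 j)
    · have : i = j+1 := by omega
      subst this; exact le_rfl

lemma whyp_W_le {w W b} (H : WHyp w W b) {y} (hy : y < b) : w y - 1 ≤ W y ∧ W y ≤ w y := by
  cases y with
  | zero => rw [H.2.2.1 hy]; split_ifs <;> omega
  | succ z => rw [H.2.2.2 z hy]; split_ifs <;> omega

/-- Exact invariant (head-north case): `2·M = Lg + Lg↓` columnwise. -/
lemma exact_inv {w W : ℕ → ℕ} {b : ℕ} (H : WHyp w W b) (h0 : 2 ≤ w 0) :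
    ∀ x, x < b →
      (2 * Mdp w (x+1) 0 = Mdp W (x+1) 0) ∧
      (∀ t, 2 * Mdp w (x+1) (t+1) = Mdp W (x+1) (t+1) + Mdp W (x+1) t) := by
  obtain ⟨hev, hmono, hW0f, hWf⟩ := H
  intro x
  induction x with
  | zero =>
    intro hb
    obtain ⟨m, hm⟩ := hev 0
    have hW0 : W 0 = w 0 - 1 := by rw [hW0f hb, if_pos (by omega)]
    have hm1 : 1 ≤ m := by omega
    constructor
    · rw [Mdp_succ, Mdp_succ]
      simp only [sum_Mdp_zero]
      rw [hW0, hm]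
      split_ifs <;> omega
    · intro t
      rw [Mdp_succ, Mdp_succ, Mdp_succ]
      simp only [sum_Mdp_zero]
      rw [hW0, hm]
      split_ifs <;> omega
  | succ x ih =>
    intro hb
    have IH := ih (by omega)
    have DS : ∀ n, 2 * (∑ s ∈ Finset.range (n+1), Mdp w (x+1) s)
        = (∑ s ∈ Finset.range (n+1), Mdp W (x+1) s) + (∑ s ∈ Finset.range n, Mdp W (x+1) s) := by
      intro n
      induction n with
      | zero => simpa using IH.1
      | succ n ihn =>
        rw [Finset.sum_range_succ (f := fun s => Mdp w (x+1) s), Nat.mul_add, ihn,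
          Finset.sum_range_succ (f := fun s => Mdp W (x+1) s) (n := n+1),
          Finset.sum_range_succ (f := fun s => Mdp W (x+1) s) (n := n)]
        have := IH.2 n
        omega
    obtain ⟨m, hm⟩ := hev (x+1)
    have hprev : w x ≤ w (x+1) := hmono x
    have hWx1 : W (x+1) = w (x+1) - (if w x < w (x+1) then 1 else 0) := hWf x hb
    have hWxlow : w x - 1 ≤ W x := (whyp_W_le ⟨hev, hmono, hW0f, hWf⟩ (by omega : x < b)).1
    have hw0le : w 0 ≤ w (x+1) := whyp_mono (b := b) ⟨hev, hmono, hW0f, hWf⟩ (by omega)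
    have hdeadsum : ∀ n, 2*n ≤ w x → (∑ s ∈ Finset.range n, Mdp W (x+1) s) = 0 := by
      intro n hn
      apply Finset.sum_eq_zero
      intro s hs
      simp only [Finset.mem_range] at hs
      exact Mdp_dead W x s (by omega)
    by_cases hpk : w x < w (x+1)
    · -- peak case
      have hW1 : W (x+1) = 2*m - 1 := by rw [hWx1, if_pos hpk, hm]
      have hm1 : 1 ≤ m := by omega
      constructor
      · rw [Mdp_succ, Mdp_succ, hW1, hm]
        rw [if_neg (by omega), if_neg (by omega), if_neg (by omega), if_neg (by omega)]
      · intro t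
        rw [Mdp_succ (x := x+1) (t := t+1), Mdp_succ (x := x+1) (t := t+1),
          Mdp_succ (x := x+1) (t := t), hW1, hm]
        rcases Nat.lt_trichotomy (t+1) m with hr | hr | hr
        · rw [if_neg (by omega), if_neg (by omega), if_neg (by omega), if_neg (by omega),
            if_neg (by omega), if_neg (by omega)]
        · rw [if_pos (by omega), if_neg (by omega), if_pos (by omega), if_pos (by omega),
            if_neg (by omega), if_neg (by omega)]
          have := DS (t+1)
          omega
        · rw [if_pos (by omega), if_pos (by omega), if_pos (by omega), if_pos (by omega),
            if_pos (by omega), if_pos (by omega)]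
          have h1 := DS (t+1)
          have h2 := DS t
          omega
    · -- non-peak case: w x = w (x+1)
      have hwx : w x = w (x+1) := by omega
      have hW1 : W (x+1) = 2*m := by rw [hWx1, if_neg hpk, hm]; omega
      have hm1 : 1 ≤ m := by omega
      constructor
      · rw [Mdp_succ, Mdp_succ, hW1, hm]
        rw [if_neg (by omega), if_neg (by omega), if_neg (by omega), if_neg (by omega)]
      · intro t
        rw [Mdp_succ (x := x+1) (t := t+1), Mdp_succ (x := x+1) (t := t+1),
          Mdp_succ (x := x+1) (t := t), hW1, hm]
        rcases Nat.lt_trichotomy (t+1) m with hr | hr | hr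
        · rw [if_neg (by omega), if_neg (by omega), if_neg (by omega), if_neg (by omega),
            if_neg (by omega), if_neg (by omega)]
        · rw [if_pos (by omega), if_neg (by omega), if_pos (by omega), if_neg (by omega),
            if_neg (by omega), if_neg (by omega)]
          have h1 := DS (t+1)
          have h2 := hdeadsum (t+1) (by omega)
          omega
        · rcases Nat.lt_or_ge (t+1) (m+2) with hr2 | hr2
          · rw [if_pos (by omega), if_pos (by omega), if_pos (by omega), if_pos (by omega),
              if_pos (by omega), if_neg (by omega)]
            have h1 := DS (t+1)
            have h2 := DS t
            have h3 : (∑ s ∈ Finset.range t, Mdp W (x+1) s) = 0 := hdeadsum t (by omega)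
            omega
          · rw [if_pos (by omega), if_pos (by omega), if_pos (by omega), if_pos (by omega),
              if_pos (by omega), if_pos (by omega)]
            have h1 := DS (t+1)
            have h2 := DS t
            omega

end Invariants
end SchroederDP

section SchroederDP2
open Finset

/-- Pointwise inequality invariant (valid in particular when `w 0 = 0`). -/
lemma ineq_inv {w W : ℕ → ℕ} {b : ℕ} (H : WHyp w W b) (h0 : w 0 = 0) :
    ∀ x, x < b →
      (Mdp W (x+1) 0 ≤ 2 * Mdp w (x+1) 0) ∧
      (∀ t, Mdp W (x+1) (t+1) + Mdp W (x+1) t ≤ 2 * Mdp w (x+1) (t+1)) := by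
  obtain ⟨hev, hmono, hW0f, hWf⟩ := H
  intro x
  induction x with
  | zero =>
    intro hb
    have hW0 : W 0 = 0 := by rw [hW0f hb, h0]; simp
    constructor
    · rw [Mdp_succ, Mdp_succ]
      simp only [sum_Mdp_zero]
      rw [hW0, h0]
      split_ifs <;> omega
    · intro t
      rw [Mdp_succ, Mdp_succ, Mdp_succ]
      simp only [sum_Mdp_zero]
      rw [hW0, h0]
      split_ifs <;> omega
  | succ x ih =>
    intro hb
    have IH := ih (by omega)
    have DSle : ∀ n, (∑ s ∈ Finset.range (n+1), Mdp W (x+1) s) + (∑ s ∈ Finset.range n, Mdp W (x+1) s)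
        ≤ 2 * (∑ s ∈ Finset.range (n+1), Mdp w (x+1) s) := by
      intro n
      induction n with
      | zero => simpa using IH.1
      | succ n ihn =>
        have e1 := Finset.sum_range_succ (fun s => Mdp w (x+1) s) (n+1)
        have e2 := Finset.sum_range_succ (fun s => Mdp W (x+1) s) (n+1)
        have e3 := Finset.sum_range_succ (fun s => Mdp W (x+1) s) n
        have e4 := Finset.sum_range_succ (fun s => Mdp w (x+1) s) n
        have := IH.2 n
        omega
    obtain ⟨m, hm⟩ := hev (x+1)
    have hWx1 : W (x+1) = w (x+1) - (if w x < w (x+1) then 1 else 0) := hWf x hb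
    have hW1le : w (x+1) - 1 ≤ W (x+1) ∧ W (x+1) ≤ w (x+1) := by
      rw [hWx1]; split_ifs <;> omega
    obtain ⟨hW1l, hW1u⟩ := hW1le
    constructor
    · rw [Mdp_succ, Mdp_succ]
      have h1 := DSle 0
      simp only [Finset.range_zero, Finset.sum_empty, Finset.range_one] at h1 ⊢
      split_ifs <;> omega
    · intro t
      rw [Mdp_succ (x := x+1) (t := t+1), Mdp_succ (x := x+1) (t := t+1),
        Mdp_succ (x := x+1) (t := t)]
      have h1 := DSle (t+1)
      have h2 := DSle t
      have h3 : (∑ s ∈ Finset.range t, Mdp W (x+1) s) ≤ ∑ s ∈ Finset.range (t+1), Mdp W (x+1) s :=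
        Finset.sum_le_sum_of_subset (Finset.range_subset_range.mpr (by omega))
      split_ifs <;> omega

/-- Strict inequality invariant for the east-start case. -/
lemma strict_inv {w W : ℕ → ℕ} {b a : ℕ} (H : WHyp w W b) (h0 : w 0 = 0)
    (hbd : ∀ y, y < b → w y ≤ 2*a) :
    ∀ x, x < b →
      (∑ t ∈ Finset.range (a+1), Mdp W (x+1) t) + (∑ t ∈ Finset.range a, Mdp W (x+1) t) + 1
        ≤ 2 * ∑ t ∈ Finset.range (a+1), Mdp w (x+1) t := by
  intro x
  induction x with
  | zero =>
    intro hb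
    simp only [zero_add]
    have hW0 : W 0 = 0 := by rw [H.2.2.1 hb, h0]; simp
    have hpt : ∀ t, Mdp W 1 t = Mdp w 1 t := by
      intro t
      rw [Mdp_succ, Mdp_succ, hW0, h0]
      simp only [Mdp_zero]
    have hs1 : ∀ n, (∑ t ∈ Finset.range n, Mdp W 1 t) = ∑ t ∈ Finset.range n, Mdp w 1 t :=
      fun n => Finset.sum_congr rfl (fun t _ => hpt t)
    rw [hs1, hs1]
    have e := Finset.sum_range_succ (fun t => Mdp w 1 t) a
    have hpos : 1 ≤ Mdp w 1 a := Mdp_pos w 0 a (fun y hy => by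
      have hy0 : y = 0 := by omega
      subst hy0; omega)
    omega
  | succ x ih =>
    intro hb
    have IH := ih (by omega)
    have hIA := ineq_inv H h0 x (by omega)
    have hIA' := ineq_inv H h0 (x+1) hb
    have DSle : ∀ n, (∑ s ∈ Finset.range (n+1), Mdp W (x+1) s) + (∑ s ∈ Finset.range n, Mdp W (x+1) s)
        ≤ 2 * (∑ s ∈ Finset.range (n+1), Mdp w (x+1) s) := by
      intro n
      induction n with
      | zero => simpa using hIA.1
      | succ n ihn =>
        have e1 := Finset.sum_range_succ (fun s => Mdp w (x+1) s) (n+1)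
        have e2 := Finset.sum_range_succ (fun s => Mdp W (x+1) s) (n+1)
        have e3 := Finset.sum_range_succ (fun s => Mdp W (x+1) s) n
        have e4 := Finset.sum_range_succ (fun s => Mdp w (x+1) s) n
        have := hIA.2 n
        omega
    have DSle' : ∀ n, (∑ s ∈ Finset.range (n+1), Mdp W (x+1+1) s) + (∑ s ∈ Finset.range n, Mdp W (x+1+1) s)
        ≤ 2 * (∑ s ∈ Finset.range (n+1), Mdp w (x+1+1) s) := by
      intro n
      induction n with
      | zero => simpa using hIA'.1
      | succ n ihn =>
        have e1 := Finset.sum_range_succ (fun s => Mdp w (x+1+1) s) (n+1)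
        have e2 := Finset.sum_range_succ (fun s => Mdp W (x+1+1) s) (n+1)
        have e3 := Finset.sum_range_succ (fun s => Mdp W (x+1+1) s) n
        have e4 := Finset.sum_range_succ (fun s => Mdp w (x+1+1) s) n
        have := hIA'.2 n
        omega
    obtain ⟨m, hm⟩ := H.1 (x+1)
    have hWx1 : W (x+1) = w (x+1) - (if w x < w (x+1) then 1 else 0) := H.2.2.2 x hb
    have hW1le : w (x+1) - 1 ≤ W (x+1) ∧ W (x+1) ≤ w (x+1) := by
      rw [hWx1]; split_ifs <;> omega
    obtain ⟨hW1l, hW1u⟩ := hW1le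
    have hwbd : w (x+1) ≤ 2*a := hbd (x+1) hb
    rcases Nat.eq_zero_or_pos a with ha | ha
    · subst ha
      have hw10 : w (x+1) = 0 := by omega
      have hW10 : W (x+1) = 0 := by omega
      simp only [zero_add, Finset.range_one, Finset.range_zero, Finset.sum_empty,
        Finset.sum_singleton] at IH ⊢
      rw [Mdp_succ, Mdp_succ, hw10, hW10]
      rw [if_pos (by omega), if_neg (by omega), if_pos (by omega), if_neg (by omega)]
      simp only [zero_add, Finset.range_one, Finset.sum_singleton] at *
      omega
    · obtain ⟨s, rfl⟩ := Nat.exists_eq_succ_of_ne_zero (by omega : a ≠ 0)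
      simp only [Nat.succ_eq_add_one] at IH ⊢
      -- ineq-c : strict pointwise at top level s+1 for column x+2
      have hc : Mdp W (x+1+1) (s+1) + Mdp W (x+1+1) s + 1 ≤ 2 * Mdp w (x+1+1) (s+1) := by
        rw [Mdp_succ (x := x+1) (t := s+1), Mdp_succ (x := x+1) (t := s+1),
          Mdp_succ (x := x+1) (t := s)]
        have h2 := DSle s
        split_ifs <;> omega
      have e1 := Finset.sum_range_succ (fun t => Mdp W (x+1+1) t) (s+1)
      have e2 := Finset.sum_range_succ (fun t => Mdp W (x+1+1) t) s
      have e3 := Finset.sum_range_succ (fun t => Mdp w (x+1+1) t) (s+1)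
      have hf := DSle' s
      omega

end SchroederDP2

section SchroederNu
open Finset

lemma eLen_cutPeaks : ∀ ν : List Step, eLen (cutPeaks ν) = eLen ν := by
  intro ν
  induction ν using cutPeaks.induct with
  | case1 => simp [cutPeaks]
  | case2 p ih => simp [cutPeaks, ih]
  | case3 s p hne ih =>
    cases s with
    | N =>
      cases p with
      | nil => simp [cutPeaks]
      | cons s' q =>
        cases s' with
        | E => exact (hne q rfl rfl).elim
        | N => simpa [cutPeaks] using ih
        | D => simpa [cutPeaks] using ih
    | E => simpa [cutPeaks] using ih
    | D => simpa [cutPeaks] using ih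

lemma nLen_cutPeaks : ∀ ν : List Step, nLen (cutPeaks ν) = nLen ν := by
  intro ν
  induction ν using cutPeaks.induct with
  | case1 => simp [cutPeaks]
  | case2 p ih => simp [cutPeaks, ih]
  | case3 s p hne ih =>
    cases s with
    | N =>
      cases p with
      | nil => simp [cutPeaks]
      | cons s' q =>
        cases s' with
        | E => exact (hne q rfl rfl).elim
        | N => simpa [cutPeaks] using ih
        | D => simpa [cutPeaks] using ih
    | E => simpa [cutPeaks] using ih
    | D => simpa [cutPeaks] using ih

/-- previous column value (0 for column 0). -/
def pcv (ν : List Step) : ℕ → ℕ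
  | 0 => 0
  | (y+1) => colVal ν y

@[simp] lemma pcv_zero (ν : List Step) : pcv ν 0 = 0 := rfl
@[simp] lemma pcv_succ (ν : List Step) (y : ℕ) : pcv ν (y+1) = colVal ν y := rfl

lemma colVal_cutPeaks : ∀ ν : List Step, Step.D ∉ ν → ∀ x, x < eLen ν →
    colVal (cutPeaks ν) x
      = colVal ν x - (if pcv ν x < colVal ν x then 1 else 0) := by
  intro ν
  induction ν using cutPeaks.induct with
  | case1 => intro _ x hx; simp at hx
  | case2 p ih =>
    intro hν x hx
    have hνp : Step.D ∉ p := fun h => hν (by simp [h])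
    have hcp : cutPeaks (Step.N :: Step.E :: p) = Step.D :: cutPeaks p := by simp [cutPeaks]
    rw [hcp]
    cases x with
    | zero => simp
    | succ x =>
      have hx' : x < eLen p := by simp at hx; omega
      have H := ih hνp x hx'
      cases x with
      | zero =>
        simp only [colVal_cons_D_succ, colVal_cons_N, colVal_cons_E_succ, colVal_cons_E_zero,
          pcv_succ, pcv_zero, Nat.lt_iff_add_one_le] at H ⊢
        split_ifs at H ⊢ <;> omega
      | succ y =>
        simp only [colVal_cons_D_succ, colVal_cons_N, colVal_cons_E_succ, pcv_succ, pcv_zero, Nat.lt_iff_add_one_le] at H ⊢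
        split_ifs at H ⊢ <;> omega
  | case3 s p hne ih =>
    intro hν x hx
    have hνp : Step.D ∉ p := fun h => hν (by simp [h])
    cases s with
    | D => exact absurd (by simp) hν
    | E =>
      have hcp : cutPeaks (Step.E :: p) = Step.E :: cutPeaks p := by simp [cutPeaks]
      rw [hcp]
      cases x with
      | zero => simp
      | succ x =>
        have hx' : x < eLen p := by simp at hx; omega
        have H := ih hνp x hx'
        cases x with
        | zero =>
          simp only [colVal_cons_E_succ, colVal_cons_E_zero, pcv_succ, pcv_zero] at H ⊢
          exact H
        | succ y =>
          simp only [colVal_cons_E_succ, pcv_succ, pcv_zero] at H ⊢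
          exact H
    | N =>
      cases p with
      | nil => simp at hx
      | cons s' q =>
        cases s' with
        | E => exact (hne q rfl rfl).elim
        | D => exact absurd (by simp) hν
        | N =>
          have hcp : cutPeaks (Step.N :: Step.N :: q) = Step.N :: cutPeaks (Step.N :: q) := by
            simp [cutPeaks]
          rw [hcp]
          have H := ih hνp x (by simpa using hx)
          cases x with
          | zero =>
            simp only [colVal_cons_N, pcv_zero, Nat.lt_iff_add_one_le] at H ⊢
            split_ifs at H ⊢ <;> omega
          | succ y =>
            simp only [colVal_cons_N, pcv_succ, pcv_zero, Nat.lt_iff_add_one_le] at H ⊢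
            split_ifs at H ⊢ <;> omega

lemma head_iff_colVal {ν : List Step} (hν : Step.D ∉ ν) (hb : 0 < eLen ν) :
    ν.head? = some Step.N ↔ 0 < colVal ν 0 := by
  cases ν with
  | nil => simp at hb
  | cons s p =>
    cases s with
    | N => simp
    | E => simp
    | D => exact absurd (by simp) hν

lemma getLast_iff_colVal : ∀ ν : List Step,
    (ν.getLast? = some Step.E ↔ (0 < eLen ν ∧ colVal ν (eLen ν - 1) = 2 * nLen ν)) := by
  intro ν
  induction ν using List.reverseRecOn with
  | nil => simp
  | append_singleton l s _ =>
    cases s with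
    | N =>
      rw [List.getLast?_concat]
      simp only [eLen_append, nLen_append]
      constructor
      · intro h; exact absurd h (by simp)
      · rintro ⟨h1, h2⟩
        exfalso
        simp only [eLen_cons_N, eLen_nil, nLen_cons_N, nLen_nil, Nat.add_zero] at h1 h2
        have hlt : eLen l - 1 < eLen l := by omega
        rw [colVal_append_left l _ _ hlt] at h2
        have := colVal_le_two_nLen l (eLen l - 1)
        omega
    | E =>
      rw [List.getLast?_concat]
      simp only [eLen_append, nLen_append, eLen_cons_E, eLen_nil, nLen_cons_E, nLen_nil]
      constructor
      · intro _
        refine ⟨by omega, ?_⟩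
        have : eLen l + 1 - 1 = eLen l := by omega
        rw [this]
        have := colVal_append_cross l Step.E [] (by simp)
        simpa using this
      · intro _; trivial
    | D =>
      rw [List.getLast?_concat]
      simp only [eLen_append, nLen_append, eLen_cons_D, eLen_nil, nLen_cons_D, nLen_nil]
      constructor
      · intro h; exact absurd h (by simp)
      · rintro ⟨h1, h2⟩
        exfalso
        have : eLen l + 1 - 1 = eLen l := by omega
        rw [this] at h2
        have := colVal_append_cross l Step.D [] (by simp)
        simp at this
        omega

end SchroederNu

section SchroederFinal
open Finset

lemma sum_invariant {M Lg : ℕ → ℕ} (h0 : 2 * M 0 = Lg 0)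
    (hs : ∀ t, 2 * M (t+1) = Lg (t+1) + Lg t) :
    ∀ n, 2 * (∑ s ∈ Finset.range (n+1), M s)
      = (∑ s ∈ Finset.range (n+1), Lg s) + ∑ s ∈ Finset.range n, Lg s := by
  intro n
  induction n with
  | zero => simpa using h0
  | succ n ihn =>
    rw [Finset.sum_range_succ (f := fun s => M s), Nat.mul_add, ihn,
      Finset.sum_range_succ (f := fun s => Lg s) (n := n+1),
      Finset.sum_range_succ (f := fun s => Lg s) (n := n)]
    have := hs n
    omega

lemma card_small (ν : List Step) :
    Nat.card {π : List Step // IsSmallSchroder ν π}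
      = ∑ t ∈ Finset.range (nLen ν + 1), Mdp (fun x => colVal ν x) (eLen ν) t := by
  rw [← card_pathSet]
  apply Nat.card_congr
  apply Equiv.subtypeEquivRight
  intro π
  constructor
  · rintro ⟨h1, h2, h3⟩; exact ⟨h1, h2, fun x _ => h3 x⟩
  · rintro ⟨h1, h2, h3⟩
    refine ⟨h1, h2, fun x => ?_⟩
    rcases Nat.lt_or_ge x (eLen ν) with h | h
    · exact h3 x h
    · rw [colVal_of_eLen_le ν x h, colVal_of_eLen_le π x (by omega), h2]

lemma card_large (ν : List Step) :
    Nat.card {π : List Step // IsLargeSchroder ν π}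
      = ∑ t ∈ Finset.range (nLen ν + 1), Mdp (fun x => colVal (cutPeaks ν) x) (eLen ν) t := by
  rw [← card_pathSet]
  apply Nat.card_congr
  apply Equiv.subtypeEquivRight
  intro π
  constructor
  · rintro ⟨h1, h2, h3⟩; exact ⟨h1, h2, fun x _ => h3 x⟩
  · rintro ⟨h1, h2, h3⟩
    refine ⟨h1, h2, fun x => ?_⟩
    rcases Nat.lt_or_ge x (eLen ν) with h | h
    · exact h3 x h
    · rw [colVal_of_eLen_le (cutPeaks ν) x (by rw [eLen_cutPeaks]; omega),
        colVal_of_eLen_le π x (by omega), h2, nLen_cutPeaks]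

theorem large_eq_twice_small_iff' (ν : List Step) (hν : IsLatticePath ν) :
    Nat.card {π : List Step // IsLargeSchroder ν π}
        = 2 * Nat.card {π : List Step // IsSmallSchroder ν π} ↔
      (ν.head? = some Step.N ∧ ν.getLast? = some Step.E) := by
  have hD : Step.D ∉ ν := hν
  have hWH : WHyp (fun x => colVal ν x) (fun x => colVal (cutPeaks ν) x) (eLen ν) := by
    refine ⟨colVal_even hD, colVal_mono_succ hD, ?_, ?_⟩
    · intro hb
      exact colVal_cutPeaks ν hD 0 hb
    · intro z hz
      exact colVal_cutPeaks ν hD (z+1) hz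
  have hcond : (ν.head? = some Step.N ∧ ν.getLast? = some Step.E) ↔
      (0 < eLen ν ∧ 0 < colVal ν 0 ∧ colVal ν (eLen ν - 1) = 2 * nLen ν) := by
    rw [getLast_iff_colVal]
    constructor
    · rintro ⟨h1, h2, h3⟩; exact ⟨h2, (head_iff_colVal hD h2).1 h1, h3⟩
    · rintro ⟨h1, h2, h3⟩; exact ⟨(head_iff_colVal hD h1).2 h2, h1, h3⟩
  rw [card_small, card_large, hcond]
  rcases Nat.eq_zero_or_pos (eLen ν) with hb0 | hbpos
  · rw [hb0]
    have h1 : (∑ t ∈ Finset.range (nLen ν + 1), Mdp (fun x => colVal ν x) 0 t) = 1 := by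
      rw [sum_Mdp_zero]; simp
    have h2 : (∑ t ∈ Finset.range (nLen ν + 1), Mdp (fun x => colVal (cutPeaks ν) x) 0 t) = 1 := by
      rw [sum_Mdp_zero]; simp
    rw [h1, h2]
    constructor
    · intro h; omega
    · rintro ⟨h, -⟩; omega
  · obtain ⟨x, hx⟩ : ∃ k, eLen ν = k + 1 := ⟨eLen ν - 1, by omega⟩
    rw [hx]
    simp only [Nat.add_sub_cancel]
    obtain ⟨m0, hm0⟩ := colVal_even hD 0
    obtain ⟨mb, hmb⟩ := colVal_even hD x
    have hxb : x < eLen ν := by omega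
    have hbd := colVal_le_two_nLen ν x
    by_cases hA : 0 < colVal ν 0
    · -- head-north case : exact invariant
      have hex := exact_inv hWH (by omega) x (by omega)
      have hDS := sum_invariant hex.1 hex.2 (nLen ν)
      by_cases hA1 : colVal ν x = 2 * nLen ν
      · -- also ends east : equality holds
        have hzero : (∑ s ∈ Finset.range (nLen ν),
            Mdp (fun x => colVal (cutPeaks ν) x) (x+1) s) = 0 := by
          apply Finset.sum_eq_zero
          intro t ht
          simp only [Finset.mem_range] at ht
          apply Mdp_dead
          have := (whyp_W_le hWH hxb).1
          beta_reduce at this ⊢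
          omega
        refine iff_of_true ?_ ⟨by omega, hA, hA1⟩
        omega
      · -- does not end east : strict inequality
        have hmba : mb < nLen ν := by omega
        have hpos : 1 ≤ Mdp (fun x => colVal (cutPeaks ν) x) (x+1) mb := by
          apply Mdp_pos
          intro y hy
          have h1 := (whyp_W_le hWH (by omega : y < eLen ν)).2
          have h2 := whyp_mono hWH (by omega : y ≤ x)
          beta_reduce at h1 h2 ⊢
          omega
        have hle : Mdp (fun x => colVal (cutPeaks ν) x) (x+1) mb
            ≤ ∑ s ∈ Finset.range (nLen ν), Mdp (fun x => colVal (cutPeaks ν) x) (x+1) s :=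
          Finset.single_le_sum (fun _ _ => Nat.zero_le _) (Finset.mem_range.mpr hmba)
        refine iff_of_false ?_ (by intro h; exact hA1 h.2.2)
        omega
    · -- east-start case : strict inequality
      have hstrict := strict_inv hWH (by omega)
        (fun y _ => colVal_le_two_nLen ν y) x (by omega)
      refine iff_of_false ?_ (by intro h; omega)
      omega

end SchroederFinal

/-- The number of large ν-Schröder paths equals twice the number of small
ν-Schröder paths if and only if ν begins with a north step and ends with an east step. -/
theorem large_eq_twice_small_iff (ν : List Step) (hν : IsLatticePath ν) :
    Nat.card {π : List Step // IsLargeSchroder ν π}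
        = 2 * Nat.card {π : List Step // IsSmallSchroder ν π} ↔
      (ν.head? = some Step.N ∧ ν.getLast? = some Step.E) :=
  large_eq_twice_small_iff' ν hν
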